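/- Let a : ℕ → ℚ be the sequence of coefficients of the formal power series expansion of R(z)/Q(z), i.e. Q(z) · (Σ_{n≥0} a_n z^n) = R(z) in ℚ[[z]], where R(z) = z⁶ − z⁵ + z⁴ − z³ + z² − z + 1 and Q(z) = (1−z³)(1−z⁵)(1−z+z²−z³)(1−z²). Then for every integer n ≥ 0, a_n = (1/360)·n³ + (7/240)·n² + (1/6)·n + (1/10)·cos(2πn/5) − (1/50)·√5·cos(2πn/5) + (1/50)·√(50+10√5)·sin(2πn/5) + (1/10)·cos(4πn/5) + (√5/50)·cos(4πn/5) + (1/8)·cos(πn/2) − (1/25)·√(10−2√5)·sin(4πn/5) + (1/9)·cos(2πn/3) + (1/27)·√3·sin(2πn/3) − (1/8)·sin(πn/2) + (7/32)·cos(πn) − (1/25)·√(10+2√5)·sin(2πn/5) − (1/50)·√5·√(10−2√5)·sin(4πn/5) + 497/1440, where cos and sin are the real cosine and sine functions and √ denotes the real square root (the real number on the right-hand side is in fact rational and equals a_n). -/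

import Mathlib

open Real Polynomial

/-- The numerator `R(z) = z⁶ − z⁵ + z⁴ − z³ + z² − z + 1` of the Poincaré series of `I_{2,3}`. -/
noncomputable def Rpoly : Polynomial ℚ :=
  X ^ 6 - X ^ 5 + X ^ 4 - X ^ 3 + X ^ 2 - X + 1

/-- The denominator `Q(z) = (1−z³)(1−z⁵)(1−z+z²−z³)(1−z²)` of the Poincaré series of `I_{2,3}`. -/
noncomputable def Qpoly : Polynomial ℚ :=
  (1 - X ^ 3) * (1 - X ^ 5) * (1 - X + X ^ 2 - X ^ 3) * (1 - X ^ 2)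

/-! ### Periodic correction tables -/

def tA : ℕ → ℚ
  | 0 => 1/5 | 1 => -1/5 | 2 => 1/5 | 3 => -1/5 | _ => 0
def tB : ℕ → ℚ
  | 0 => 1/8 | 1 => -1/8 | 2 => -1/8 | _ => 1/8
def tC : ℕ → ℚ
  | 0 => 1/9 | 1 => 0 | _ => -1/9
def tD : ℕ → ℚ
  | 0 => 7/32 | _ => -7/32

/-- The candidate closed form (as a rational number). -/
def cseq : ℕ → ℚ := fun n =>
  (n : ℚ)^3/360 + 7*(n : ℚ)^2/240 + (n : ℚ)/6 + 497/1440
    + tA (n % 5) + tB (n % 4) + tC (n % 3) + tD (n % 2)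

/-! ### Square roots and special trigonometric values -/

lemma sqrt5_sq : Real.sqrt 5 ^ 2 = 5 := Real.sq_sqrt (by norm_num)
lemma sqrt3_sq : Real.sqrt 3 ^ 2 = 3 := Real.sq_sqrt (by norm_num)
lemma sqrt5_nonneg : (0:ℝ) ≤ Real.sqrt 5 := Real.sqrt_nonneg 5
lemma sqrt5_lt : Real.sqrt 5 < 3 := by nlinarith [sqrt5_sq, sqrt5_nonneg]

lemma cos2pi5 : Real.cos (2*π/5) = (Real.sqrt 5 - 1)/4 := by
  rw [show (2*π/5 : ℝ) = 2*(π/5) by ring, Real.cos_two_mul, Real.cos_pi_div_five]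
  linear_combination sqrt5_sq / 8

lemma cos4pi5 : Real.cos (4*π/5) = -(1 + Real.sqrt 5)/4 := by
  rw [show (4*π/5 : ℝ) = 2*(2*π/5) by ring, Real.cos_two_mul, cos2pi5]
  linear_combination sqrt5_sq / 8

lemma sin2pi5 : Real.sin (2*π/5) = Real.sqrt (10 + 2*Real.sqrt 5)/4 := by
  rw [Real.sin_eq_sqrt_one_sub_cos_sq (by positivity) (by nlinarith [pi_pos]), cos2pi5,
    show (1 - ((Real.sqrt 5 - 1)/4)^2) = (10 + 2*Real.sqrt 5)/4^2 by linear_combination -sqrt5_sq/16,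
    Real.sqrt_div (by positivity), Real.sqrt_sq (by norm_num : (0:ℝ) ≤ 4)]

lemma sin4pi5 : Real.sin (4*π/5) = Real.sqrt (10 - 2*Real.sqrt 5)/4 := by
  rw [Real.sin_eq_sqrt_one_sub_cos_sq (by positivity) (by nlinarith [pi_pos]), cos4pi5,
    show (1 - (-(1 + Real.sqrt 5)/4)^2) = (10 - 2*Real.sqrt 5)/4^2 by linear_combination -sqrt5_sq/16,
    Real.sqrt_div (by nlinarith [sqrt5_sq, sqrt5_nonneg]), Real.sqrt_sq (by norm_num : (0:ℝ) ≤ 4)]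

lemma cos2pi3 : Real.cos (2*π/3) = -(1/2) := by
  rw [show (2*π/3 : ℝ) = π - π/3 by ring, Real.cos_pi_sub, Real.cos_pi_div_three]

lemma sin2pi3 : Real.sin (2*π/3) = Real.sqrt 3 / 2 := by
  rw [show (2*π/3 : ℝ) = π - π/3 by ring, Real.sin_pi_sub, Real.sin_pi_div_three]

lemma u_sq : Real.sqrt (10 + 2*Real.sqrt 5) ^ 2 = 10 + 2*Real.sqrt 5 :=
  Real.sq_sqrt (by positivity)
lemma v_sq : Real.sqrt (10 - 2*Real.sqrt 5) ^ 2 = 10 - 2*Real.sqrt 5 :=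
  Real.sq_sqrt (by nlinarith [sqrt5_sq, sqrt5_nonneg])
lemma w_eq : Real.sqrt (50 + 10*Real.sqrt 5) = Real.sqrt 5 * Real.sqrt (10 + 2*Real.sqrt 5) := by
  rw [show (50 + 10*Real.sqrt 5 : ℝ) = 5 * (10 + 2*Real.sqrt 5) by ring,
    Real.sqrt_mul (by norm_num : (0:ℝ) ≤ 5)]
lemma uv_eq :
    Real.sqrt (10 + 2*Real.sqrt 5) * Real.sqrt (10 - 2*Real.sqrt 5) = 4 * Real.sqrt 5 := by
  rw [← Real.sqrt_mul (by positivity),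
    show (10 + 2*Real.sqrt 5) * (10 - 2*Real.sqrt 5) = 100 - 4*(Real.sqrt 5^2) by ring,
    sqrt5_sq, show (100 - 4*5 : ℝ) = 4^2 * 5 by norm_num, Real.sqrt_mul (by positivity),
    Real.sqrt_sq (by norm_num : (0:ℝ) ≤ 4)]

/-! ### The four periodic trigonometric pieces -/

lemma eqA (n : ℕ) :
    (1 / 10) * Real.cos (2 * π * n / 5)
      - (1 / 50) * Real.sqrt 5 * Real.cos (2 * π * n / 5)
      + (1 / 50) * Real.sqrt (50 + 10 * Real.sqrt 5) * Real.sin (2 * π * n / 5)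
      + (1 / 10) * Real.cos (4 * π * n / 5)
      + (Real.sqrt 5 / 50) * Real.cos (4 * π * n / 5)
      - (1 / 25) * Real.sqrt (10 - 2 * Real.sqrt 5) * Real.sin (4 * π * n / 5)
      - (1 / 25) * Real.sqrt (10 + 2 * Real.sqrt 5) * Real.sin (2 * π * n / 5)
      - (1 / 50) * Real.sqrt 5 * Real.sqrt (10 - 2 * Real.sqrt 5) * Real.sin (4 * π * n / 5)
      = (tA (n % 5) : ℝ) := by
  obtain ⟨q, r, hr, rfl⟩ : ∃ q r, r < 5 ∧ n = 5*q + r :=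
    ⟨n/5, n%5, Nat.mod_lt _ (by norm_num), (Nat.div_add_mod n 5).symm⟩
  rw [Nat.mul_add_mod, w_eq]
  interval_cases r
  · rw [show (2*π*(↑(5*q+0))/5 : ℝ) = 0 + (q:ℤ)*(2*π) by push_cast; ring,
      show (4*π*(↑(5*q+0))/5 : ℝ) = 0 + (2*q:ℤ)*(2*π) by push_cast; ring,
      Real.cos_add_int_mul_two_pi, Real.sin_add_int_mul_two_pi,
      Real.cos_add_int_mul_two_pi, Real.sin_add_int_mul_two_pi]
    simp only [Real.cos_neg, Real.sin_neg, Real.cos_zero, Real.sin_zero]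
    show _ = ((1/5 : ℚ) : ℝ)
    push_cast; ring
  · rw [show (2*π*(↑(5*q+1))/5 : ℝ) = 2*π/5 + (q:ℤ)*(2*π) by push_cast; ring,
      show (4*π*(↑(5*q+1))/5 : ℝ) = 4*π/5 + (2*q:ℤ)*(2*π) by push_cast; ring,
      Real.cos_add_int_mul_two_pi, Real.sin_add_int_mul_two_pi,
      Real.cos_add_int_mul_two_pi, Real.sin_add_int_mul_two_pi]
    simp only [cos2pi5, sin2pi5, cos4pi5, sin4pi5]
    show _ = ((-1/5 : ℚ) : ℝ)
    push_cast
    linear_combination ((-1/100 : ℝ) + (1/200 : ℝ) * Real.sqrt 5) * u_sq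
      + ((-1/100 : ℝ) + (-1/200 : ℝ) * Real.sqrt 5) * v_sq + (1/100 : ℝ) * sqrt5_sq
  · rw [show (2*π*(↑(5*q+2))/5 : ℝ) = 4*π/5 + (q:ℤ)*(2*π) by push_cast; ring,
      show (4*π*(↑(5*q+2))/5 : ℝ) = -(2*π/5) + (2*q+1:ℤ)*(2*π) by push_cast; ring,
      Real.cos_add_int_mul_two_pi, Real.sin_add_int_mul_two_pi,
      Real.cos_add_int_mul_two_pi, Real.sin_add_int_mul_two_pi]
    simp only [Real.cos_neg, Real.sin_neg, cos2pi5, sin2pi5, cos4pi5, sin4pi5]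
    show _ = ((1/5 : ℚ) : ℝ)
    push_cast
    linear_combination (1/20 : ℝ) * sqrt5_sq + ((1/100 : ℝ) * Real.sqrt 5) * uv_eq
  · rw [show (2*π*(↑(5*q+3))/5 : ℝ) = -(4*π/5) + (q+1:ℤ)*(2*π) by push_cast; ring,
      show (4*π*(↑(5*q+3))/5 : ℝ) = 2*π/5 + (2*q+1:ℤ)*(2*π) by push_cast; ring,
      Real.cos_add_int_mul_two_pi, Real.sin_add_int_mul_two_pi,
      Real.cos_add_int_mul_two_pi, Real.sin_add_int_mul_two_pi]
    simp only [Real.cos_neg, Real.sin_neg, cos2pi5, sin2pi5, cos4pi5, sin4pi5]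
    show _ = ((-1/5 : ℚ) : ℝ)
    push_cast
    linear_combination (-3/100 : ℝ) * sqrt5_sq + ((-1/100 : ℝ) * Real.sqrt 5) * uv_eq
  · rw [show (2*π*(↑(5*q+4))/5 : ℝ) = -(2*π/5) + (q+1:ℤ)*(2*π) by push_cast; ring,
      show (4*π*(↑(5*q+4))/5 : ℝ) = -(4*π/5) + (2*q+2:ℤ)*(2*π) by push_cast; ring,
      Real.cos_add_int_mul_two_pi, Real.sin_add_int_mul_two_pi,
      Real.cos_add_int_mul_two_pi, Real.sin_add_int_mul_two_pi]
    simp only [Real.cos_neg, Real.sin_neg, cos2pi5, sin2pi5, cos4pi5, sin4pi5]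
    show _ = ((0 : ℚ) : ℝ)
    push_cast
    linear_combination ((1/100 : ℝ) + (-1/200 : ℝ) * Real.sqrt 5) * u_sq
      + ((1/100 : ℝ) + (1/200 : ℝ) * Real.sqrt 5) * v_sq + (-3/100 : ℝ) * sqrt5_sq

lemma eqB (n : ℕ) :
    (1 / 8) * Real.cos (π * n / 2) - (1 / 8) * Real.sin (π * n / 2) = (tB (n % 4) : ℝ) := by
  obtain ⟨q, r, hr, rfl⟩ : ∃ q r, r < 4 ∧ n = 4*q + r :=
    ⟨n/4, n%4, Nat.mod_lt _ (by norm_num), (Nat.div_add_mod n 4).symm⟩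
  rw [Nat.mul_add_mod]
  interval_cases r
  · rw [show (π*(↑(4*q+0))/2 : ℝ) = 0 + (q:ℤ)*(2*π) by push_cast; ring,
      Real.cos_add_int_mul_two_pi, Real.sin_add_int_mul_two_pi]
    show _ = ((1/8 : ℚ) : ℝ); push_cast; norm_num
  · rw [show (π*(↑(4*q+1))/2 : ℝ) = π/2 + (q:ℤ)*(2*π) by push_cast; ring,
      Real.cos_add_int_mul_two_pi, Real.sin_add_int_mul_two_pi,
      Real.cos_pi_div_two, Real.sin_pi_div_two]
    show _ = ((-1/8 : ℚ) : ℝ); push_cast; norm_num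
  · rw [show (π*(↑(4*q+2))/2 : ℝ) = π + (q:ℤ)*(2*π) by push_cast; ring,
      Real.cos_add_int_mul_two_pi, Real.sin_add_int_mul_two_pi,
      Real.cos_pi, Real.sin_pi]
    show _ = ((-1/8 : ℚ) : ℝ); push_cast; norm_num
  · rw [show (π*(↑(4*q+3))/2 : ℝ) = -(π/2) + (q+1:ℤ)*(2*π) by push_cast; ring,
      Real.cos_add_int_mul_two_pi, Real.sin_add_int_mul_two_pi,
      Real.cos_neg, Real.sin_neg, Real.cos_pi_div_two, Real.sin_pi_div_two]
    show _ = ((1/8 : ℚ) : ℝ); push_cast; norm_num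

lemma eqC (n : ℕ) :
    (1 / 9) * Real.cos (2 * π * n / 3) + (1 / 27) * Real.sqrt 3 * Real.sin (2 * π * n / 3)
      = (tC (n % 3) : ℝ) := by
  obtain ⟨q, r, hr, rfl⟩ : ∃ q r, r < 3 ∧ n = 3*q + r :=
    ⟨n/3, n%3, Nat.mod_lt _ (by norm_num), (Nat.div_add_mod n 3).symm⟩
  rw [Nat.mul_add_mod]
  interval_cases r
  · rw [show (2*π*(↑(3*q+0))/3 : ℝ) = 0 + (q:ℤ)*(2*π) by push_cast; ring,
      Real.cos_add_int_mul_two_pi, Real.sin_add_int_mul_two_pi]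
    show _ = ((1/9 : ℚ) : ℝ); push_cast; norm_num
  · rw [show (2*π*(↑(3*q+1))/3 : ℝ) = 2*π/3 + (q:ℤ)*(2*π) by push_cast; ring,
      Real.cos_add_int_mul_two_pi, Real.sin_add_int_mul_two_pi, cos2pi3, sin2pi3]
    show _ = ((0 : ℚ) : ℝ); push_cast
    linear_combination (1/54 : ℝ) * sqrt3_sq
  · rw [show (2*π*(↑(3*q+2))/3 : ℝ) = -(2*π/3) + (q+1:ℤ)*(2*π) by push_cast; ring,
      Real.cos_add_int_mul_two_pi, Real.sin_add_int_mul_two_pi,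
      Real.cos_neg, Real.sin_neg, cos2pi3, sin2pi3]
    show _ = ((-1/9 : ℚ) : ℝ); push_cast
    linear_combination (-1/54 : ℝ) * sqrt3_sq

lemma eqD (n : ℕ) : (7 / 32) * Real.cos (π * n) = (tD (n % 2) : ℝ) := by
  obtain ⟨q, r, hr, rfl⟩ : ∃ q r, r < 2 ∧ n = 2*q + r :=
    ⟨n/2, n%2, Nat.mod_lt _ (by norm_num), (Nat.div_add_mod n 2).symm⟩
  rw [Nat.mul_add_mod]
  interval_cases r
  · rw [show (π*(↑(2*q+0)) : ℝ) = 0 + (q:ℤ)*(2*π) by push_cast; ring,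
      Real.cos_add_int_mul_two_pi]
    show _ = ((7/32 : ℚ) : ℝ); push_cast; norm_num
  · rw [show (π*(↑(2*q+1)) : ℝ) = π + (q:ℤ)*(2*π) by push_cast; ring,
      Real.cos_add_int_mul_two_pi, Real.cos_pi]
    show _ = ((-7/32 : ℚ) : ℝ); push_cast; norm_num

/-! ### Coefficients of `Qpoly` and `Rpoly` -/

lemma Qexp : Qpoly = 1 - X^1 - X^3 + X^6 + X^7 - X^10 - X^12 + X^13 := by
  unfold Qpoly; ring

lemma Rexp : Rpoly = 1 - X^1 + X^2 - X^3 + X^4 - X^5 + X^6 := by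
  unfold Rpoly; ring

lemma Qc0 : Qpoly.coeff 0 = 1 := by rw [Qexp]; norm_num [coeff_X_pow, Polynomial.coeff_one, Polynomial.coeff_X]
lemma Qc1 : Qpoly.coeff 1 = -1 := by rw [Qexp]; norm_num [coeff_X_pow, Polynomial.coeff_one, Polynomial.coeff_X]
lemma Qc2 : Qpoly.coeff 2 = 0 := by rw [Qexp]; norm_num [coeff_X_pow, Polynomial.coeff_one, Polynomial.coeff_X]
lemma Qc3 : Qpoly.coeff 3 = -1 := by rw [Qexp]; norm_num [coeff_X_pow, Polynomial.coeff_one, Polynomial.coeff_X]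
lemma Qc4 : Qpoly.coeff 4 = 0 := by rw [Qexp]; norm_num [coeff_X_pow, Polynomial.coeff_one, Polynomial.coeff_X]
lemma Qc5 : Qpoly.coeff 5 = 0 := by rw [Qexp]; norm_num [coeff_X_pow, Polynomial.coeff_one, Polynomial.coeff_X]
lemma Qc6 : Qpoly.coeff 6 = 1 := by rw [Qexp]; norm_num [coeff_X_pow, Polynomial.coeff_one, Polynomial.coeff_X]
lemma Qc7 : Qpoly.coeff 7 = 1 := by rw [Qexp]; norm_num [coeff_X_pow, Polynomial.coeff_one, Polynomial.coeff_X]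
lemma Qc8 : Qpoly.coeff 8 = 0 := by rw [Qexp]; norm_num [coeff_X_pow, Polynomial.coeff_one, Polynomial.coeff_X]
lemma Qc9 : Qpoly.coeff 9 = 0 := by rw [Qexp]; norm_num [coeff_X_pow, Polynomial.coeff_one, Polynomial.coeff_X]
lemma Qc10 : Qpoly.coeff 10 = -1 := by rw [Qexp]; norm_num [coeff_X_pow, Polynomial.coeff_one, Polynomial.coeff_X]
lemma Qc11 : Qpoly.coeff 11 = 0 := by rw [Qexp]; norm_num [coeff_X_pow, Polynomial.coeff_one, Polynomial.coeff_X]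
lemma Qc12 : Qpoly.coeff 12 = -1 := by rw [Qexp]; norm_num [coeff_X_pow, Polynomial.coeff_one, Polynomial.coeff_X]
lemma Qc13 : Qpoly.coeff 13 = 1 := by rw [Qexp]; norm_num [coeff_X_pow, Polynomial.coeff_one, Polynomial.coeff_X]
lemma Rc0 : Rpoly.coeff 0 = 1 := by rw [Rexp]; norm_num [coeff_X_pow, Polynomial.coeff_one, Polynomial.coeff_X]
lemma Rc1 : Rpoly.coeff 1 = -1 := by rw [Rexp]; norm_num [coeff_X_pow, Polynomial.coeff_one, Polynomial.coeff_X]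
lemma Rc2 : Rpoly.coeff 2 = 1 := by rw [Rexp]; norm_num [coeff_X_pow, Polynomial.coeff_one, Polynomial.coeff_X]
lemma Rc3 : Rpoly.coeff 3 = -1 := by rw [Rexp]; norm_num [coeff_X_pow, Polynomial.coeff_one, Polynomial.coeff_X]
lemma Rc4 : Rpoly.coeff 4 = 1 := by rw [Rexp]; norm_num [coeff_X_pow, Polynomial.coeff_one, Polynomial.coeff_X]
lemma Rc5 : Rpoly.coeff 5 = -1 := by rw [Rexp]; norm_num [coeff_X_pow, Polynomial.coeff_one, Polynomial.coeff_X]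
lemma Rc6 : Rpoly.coeff 6 = 1 := by rw [Rexp]; norm_num [coeff_X_pow, Polynomial.coeff_one, Polynomial.coeff_X]

lemma Qvanish (k : ℕ) (hk : 13 < k) : Qpoly.coeff k = 0 := by
  rw [Qexp]
  simp only [Polynomial.coeff_add, Polynomial.coeff_sub, coeff_X_pow, Polynomial.coeff_one, Polynomial.coeff_X]
  split_ifs <;> first | omega | norm_num

lemma Rvanish (k : ℕ) (hk : 6 < k) : Rpoly.coeff k = 0 := by
  rw [Rexp]
  simp only [Polynomial.coeff_add, Polynomial.coeff_sub, coeff_X_pow, Polynomial.coeff_one, Polynomial.coeff_X]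
  split_ifs <;> first | omega | norm_num

/-! ### The recurrence for the closed form -/

lemma recA (m : ℕ) : tA ((m + 13) % 5) - tA ((m + 12) % 5) - tA ((m + 10) % 5) + tA ((m + 7) % 5) + tA ((m + 6) % 5) - tA ((m + 3) % 5) - tA ((m + 1) % 5) + tA (m % 5) = 0 := by
  have h : m % 5 < 5 := Nat.mod_lt _ (by norm_num)
  obtain ⟨q, r, hr, rfl⟩ : ∃ q r, r < 5 ∧ m = 5*q + r :=
    ⟨m/5, m%5, h, (Nat.div_add_mod m 5).symm⟩
  interval_cases r <;>
    simp [Nat.add_mod, Nat.mul_add_mod, tA] <;> norm_num [tA]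

lemma recB (m : ℕ) : tB ((m + 13) % 4) - tB ((m + 12) % 4) - tB ((m + 10) % 4) + tB ((m + 7) % 4) + tB ((m + 6) % 4) - tB ((m + 3) % 4) - tB ((m + 1) % 4) + tB (m % 4) = 0 := by
  have h : m % 4 < 4 := Nat.mod_lt _ (by norm_num)
  obtain ⟨q, r, hr, rfl⟩ : ∃ q r, r < 4 ∧ m = 4*q + r :=
    ⟨m/4, m%4, h, (Nat.div_add_mod m 4).symm⟩
  interval_cases r <;>
    simp [Nat.add_mod, Nat.mul_add_mod, tB] <;> norm_num [tB]

lemma recC (m : ℕ) : tC ((m + 13) % 3) - tC ((m + 12) % 3) - tC ((m + 10) % 3) + tC ((m + 7) % 3) + tC ((m + 6) % 3) - tC ((m + 3) % 3) - tC ((m + 1) % 3) + tC (m % 3) = 0 := by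
  have h : m % 3 < 3 := Nat.mod_lt _ (by norm_num)
  obtain ⟨q, r, hr, rfl⟩ : ∃ q r, r < 3 ∧ m = 3*q + r :=
    ⟨m/3, m%3, h, (Nat.div_add_mod m 3).symm⟩
  interval_cases r <;>
    simp [Nat.add_mod, Nat.mul_add_mod, tC] <;> norm_num [tC]

lemma recD (m : ℕ) : tD ((m + 13) % 2) - tD ((m + 12) % 2) - tD ((m + 10) % 2) + tD ((m + 7) % 2) + tD ((m + 6) % 2) - tD ((m + 3) % 2) - tD ((m + 1) % 2) + tD (m % 2) = 0 := by
  have h : m % 2 < 2 := Nat.mod_lt _ (by norm_num)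
  obtain ⟨q, r, hr, rfl⟩ : ∃ q r, r < 2 ∧ m = 2*q + r :=
    ⟨m/2, m%2, h, (Nat.div_add_mod m 2).symm⟩
  interval_cases r <;>
    simp [Nat.add_mod, Nat.mul_add_mod, tD] <;> norm_num [tD]

lemma crec (m : ℕ) : cseq (m+13) = cseq (m+12) + cseq (m+10) - cseq (m+7) - cseq (m+6)
    + cseq (m+3) + cseq (m+1) - cseq m := by
  have hA := recA m; have hB := recB m; have hC := recC m; have hD := recD m
  simp only [cseq]
  push_cast
  linear_combination hA + hB + hC + hD

lemma cval0 : cseq 0 = 1 := by norm_num [cseq, tA, tB, tC, tD]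
lemma cval1 : cseq 1 = 0 := by norm_num [cseq, tA, tB, tC, tD]
lemma cval2 : cseq 2 = 1 := by norm_num [cseq, tA, tB, tC, tD]
lemma cval3 : cseq 3 = 1 := by norm_num [cseq, tA, tB, tC, tD]
lemma cval4 : cseq 4 = 2 := by norm_num [cseq, tA, tB, tC, tD]
lemma cval5 : cseq 5 = 2 := by norm_num [cseq, tA, tB, tC, tD]
lemma cval6 : cseq 6 = 3 := by norm_num [cseq, tA, tB, tC, tD]
lemma cval7 : cseq 7 = 4 := by norm_num [cseq, tA, tB, tC, tD]
lemma cval8 : cseq 8 = 5 := by norm_num [cseq, tA, tB, tC, tD]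
lemma cval9 : cseq 9 = 6 := by norm_num [cseq, tA, tB, tC, tD]
lemma cval10 : cseq 10 = 8 := by norm_num [cseq, tA, tB, tC, tD]
lemma cval11 : cseq 11 = 9 := by norm_num [cseq, tA, tB, tC, tD]
lemma cval12 : cseq 12 = 12 := by norm_num [cseq, tA, tB, tC, tD]

/-- The Hilbert quasi-polynomial of the algebra `I_{2,3}` of joint invariants of two
binary forms of degrees 2 and 3: if `a : ℕ → ℚ` is the coefficient sequence of the
power series expansion of `R(z)/Q(z)`, then `a n` is given by the stated
quasi-polynomial expression in `n`. -/
theorem hilbert_polynomial_I_two_three (a : ℕ → ℚ)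
    (ha : (Qpoly : PowerSeries ℚ) * PowerSeries.mk a = (Rpoly : PowerSeries ℚ)) (n : ℕ) :
    (a n : ℝ) =
      (1 / 360) * n ^ 3 + (7 / 240) * n ^ 2 + (1 / 6) * n
        + (1 / 10) * Real.cos (2 * π * n / 5)
        - (1 / 50) * Real.sqrt 5 * Real.cos (2 * π * n / 5)
        + (1 / 50) * Real.sqrt (50 + 10 * Real.sqrt 5) * Real.sin (2 * π * n / 5)
        + (1 / 10) * Real.cos (4 * π * n / 5)
        + (Real.sqrt 5 / 50) * Real.cos (4 * π * n / 5)
        + (1 / 8) * Real.cos (π * n / 2)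
        - (1 / 25) * Real.sqrt (10 - 2 * Real.sqrt 5) * Real.sin (4 * π * n / 5)
        + (1 / 9) * Real.cos (2 * π * n / 3)
        + (1 / 27) * Real.sqrt 3 * Real.sin (2 * π * n / 3)
        - (1 / 8) * Real.sin (π * n / 2)
        + (7 / 32) * Real.cos (π * n)
        - (1 / 25) * Real.sqrt (10 + 2 * Real.sqrt 5) * Real.sin (2 * π * n / 5)
        - (1 / 50) * Real.sqrt 5 * Real.sqrt (10 - 2 * Real.sqrt 5) * Real.sin (4 * π * n / 5)
        + 497 / 1440 := by
  have key : ∀ m, ∑ k ∈ Finset.range (m+1), Qpoly.coeff k * a (m - k) = Rpoly.coeff m := by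
    intro m
    have h := congrArg (PowerSeries.coeff (R := ℚ) m) ha
    rw [PowerSeries.coeff_mul, Finset.Nat.sum_antidiagonal_eq_sum_range_succ_mk] at h
    simpa [Polynomial.coeff_coe, PowerSeries.coeff_mk] using h
  have v0 : a 0 = 1 := by
    have h := key 0
    norm_num [Finset.sum_range_succ, Qc0, Rc0] at h
    linarith
  have v1 : a 1 = 0 := by
    have h := key 1
    norm_num [Finset.sum_range_succ, Qc0, Qc1, Rc1, v0] at h
    linarith
  have v2 : a 2 = 1 := by
    have h := key 2
    norm_num [Finset.sum_range_succ, Qc0, Qc1, Qc2, Rc2, v0, v1] at h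
    linarith
  have v3 : a 3 = 1 := by
    have h := key 3
    norm_num [Finset.sum_range_succ, Qc0, Qc1, Qc2, Qc3, Rc3, v0, v1, v2] at h
    linarith
  have v4 : a 4 = 2 := by
    have h := key 4
    norm_num [Finset.sum_range_succ, Qc0, Qc1, Qc2, Qc3, Qc4, Rc4, v0, v1, v2, v3] at h
    linarith
  have v5 : a 5 = 2 := by
    have h := key 5
    norm_num [Finset.sum_range_succ, Qc0, Qc1, Qc2, Qc3, Qc4, Qc5, Rc5, v0, v1, v2, v3, v4] at h
    linarith
  have v6 : a 6 = 3 := by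
    have h := key 6
    norm_num [Finset.sum_range_succ, Qc0, Qc1, Qc2, Qc3, Qc4, Qc5, Qc6, Rc6, v0, v1, v2, v3, v4, v5] at h
    linarith
  have v7 : a 7 = 4 := by
    have h := key 7
    norm_num [Finset.sum_range_succ, Qc0, Qc1, Qc2, Qc3, Qc4, Qc5, Qc6, Qc7, Rvanish 7 (by norm_num), v0, v1, v2, v3, v4, v5, v6] at h
    linarith
  have v8 : a 8 = 5 := by
    have h := key 8
    norm_num [Finset.sum_range_succ, Qc0, Qc1, Qc2, Qc3, Qc4, Qc5, Qc6, Qc7, Qc8, Rvanish 8 (by norm_num), v0, v1, v2, v3, v4, v5, v6, v7] at h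
    linarith
  have v9 : a 9 = 6 := by
    have h := key 9
    norm_num [Finset.sum_range_succ, Qc0, Qc1, Qc2, Qc3, Qc4, Qc5, Qc6, Qc7, Qc8, Qc9, Rvanish 9 (by norm_num), v0, v1, v2, v3, v4, v5, v6, v7, v8] at h
    linarith
  have v10 : a 10 = 8 := by
    have h := key 10
    norm_num [Finset.sum_range_succ, Qc0, Qc1, Qc2, Qc3, Qc4, Qc5, Qc6, Qc7, Qc8, Qc9, Qc10, Rvanish 10 (by norm_num), v0, v1, v2, v3, v4, v5, v6, v7, v8, v9] at h
    linarith
  have v11 : a 11 = 9 := by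
    have h := key 11
    norm_num [Finset.sum_range_succ, Qc0, Qc1, Qc2, Qc3, Qc4, Qc5, Qc6, Qc7, Qc8, Qc9, Qc10, Qc11, Rvanish 11 (by norm_num), v0, v1, v2, v3, v4, v5, v6, v7, v8, v9, v10] at h
    linarith
  have v12 : a 12 = 12 := by
    have h := key 12
    norm_num [Finset.sum_range_succ, Qc0, Qc1, Qc2, Qc3, Qc4, Qc5, Qc6, Qc7, Qc8, Qc9, Qc10, Qc11, Qc12, Rvanish 12 (by norm_num), v0, v1, v2, v3, v4, v5, v6, v7, v8, v9, v10, v11] at h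
    linarith
  have rec13 : ∀ m, a (m+13) = a (m+12) + a (m+10) - a (m+7) - a (m+6)
      + a (m+3) + a (m+1) - a m := by
    intro m
    have h := key (m+13)
    rw [show m + 13 + 1 = m + 14 by ring] at h
    rw [← Finset.sum_subset (Finset.range_subset_range.mpr (by omega : 14 ≤ m + 14))
      (fun x _ hx => by rw [Qvanish x (by simp at hx; omega), zero_mul])] at h
    rw [Rvanish _ (by omega)] at h
    norm_num [Finset.sum_range_succ, Qc0, Qc1, Qc2, Qc3, Qc4, Qc5, Qc6, Qc7, Qc8, Qc9,
      Qc10, Qc11, Qc12, Qc13] at h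
    rw [show m+13-3 = m+10 by omega, show m+13-6 = m+7 by omega,
      show m+13-7 = m+6 by omega, show m+13-10 = m+3 by omega,
      show m+13-12 = m+1 by omega] at h
    linarith
  have main : ∀ k, a k = cseq k := by
    intro k
    induction k using Nat.strong_induction_on with
    | _ k ih =>
      rcases lt_or_ge k 13 with hk | hk
      · interval_cases k
        · rw [v0, cval0]
        · rw [v1, cval1]
        · rw [v2, cval2]
        · rw [v3, cval3]
        · rw [v4, cval4]
        · rw [v5, cval5]
        · rw [v6, cval6]
        · rw [v7, cval7]
        · rw [v8, cval8]
        · rw [v9, cval9]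
        · rw [v10, cval10]
        · rw [v11, cval11]
        · rw [v12, cval12]
      · obtain ⟨m, rfl⟩ : ∃ m, k = m + 13 := ⟨k - 13, by omega⟩
        rw [rec13 m, ih (m+12) (by omega), ih (m+10) (by omega), ih (m+7) (by omega),
          ih (m+6) (by omega), ih (m+3) (by omega), ih (m+1) (by omega), ih m (by omega)]
        linarith [crec m]
  rw [main n]
  have hA := eqA n; have hB := eqB n; have hC := eqC n; have hD := eqD n
  simp only [cseq]
  push_cast
  linear_combination -hA - hB - hC - hD
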